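/- (Corollary, no butterfly spread arbitrage.) Let ω : ℝ → (0, ∞) be twice differentiable and suppose that for every κ ∈ ℝ both Φ(z₊(κ)) + φ(z₊(κ)) ω'(κ) ≥ 0 and ξ^ω(κ) := (1 − (κ/ω(κ)) ω'(κ))² − (1/4)(ω(κ) ω'(κ))² + ω(κ) ω''(κ) ≥ 0 hold, where z₊(κ) = (κ + ω(κ)²/2)/ω(κ). Then the put price slice P(κ) = exp κ · Φ(z₊(κ)) − Φ(z₋(κ)), with z₋(κ) = (κ − ω(κ)²/2)/ω(κ), is convex on ℝ. -/

import Mathlib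

open MeasureTheory Real

/-- Standard normal probability density function. -/
noncomputable def stdNormalPDF (z : ℝ) : ℝ := Real.exp (-z ^ 2 / 2) / Real.sqrt (2 * Real.pi)

/-- Standard normal cumulative distribution function. -/
noncomputable def stdNormalCDF (z : ℝ) : ℝ := ∫ u in Set.Iic z, stdNormalPDF u

lemma pdf_pos (z : ℝ) : 0 < stdNormalPDF z :=
  div_pos (Real.exp_pos _) (Real.sqrt_pos.2 (by positivity))

lemma pdf_cont : Continuous stdNormalPDF := by
  unfold stdNormalPDF; fun_prop

lemma pdf_integrable : Integrable stdNormalPDF := by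
  have h : Integrable (fun x : ℝ => Real.exp (-(1/2) * x ^ 2)) :=
    integrable_exp_neg_mul_sq (by norm_num)
  have h2 := h.div_const (Real.sqrt (2 * Real.pi))
  have : stdNormalPDF = fun x => Real.exp (-(1/2) * x ^ 2) / Real.sqrt (2 * Real.pi) := by
    funext x; unfold stdNormalPDF; ring_nf
  rw [this]; exact h2

lemma cdf_hasDerivAt (z : ℝ) : HasDerivAt stdNormalCDF (stdNormalPDF z) z := by
  have hfun : stdNormalCDF = fun z => stdNormalCDF 0 + ∫ x in (0:ℝ)..z, stdNormalPDF x := by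
    funext z
    rw [← intervalIntegral.integral_Iic_sub_Iic pdf_integrable.integrableOn pdf_integrable.integrableOn]
    unfold stdNormalCDF; ring
  rw [hfun]
  exact ((intervalIntegral.integral_hasDerivAt_right
    (pdf_integrable.intervalIntegrable)
    (pdf_cont.stronglyMeasurableAtFilter _ _) pdf_cont.continuousAt)).const_add _

lemma pdf_hasDerivAt (z : ℝ) : HasDerivAt stdNormalPDF (-z * stdNormalPDF z) z := by
  have h : HasDerivAt (fun z : ℝ => Real.exp (-z ^ 2 / 2)) (-z * Real.exp (-z ^ 2 / 2)) z := by
    have h1 : HasDerivAt (fun z : ℝ => -z ^ 2 / 2) (-z) z := by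
      have := ((hasDerivAt_pow 2 z).neg).div_const 2
      simpa using this.congr_deriv (by ring)
    simpa [mul_comm] using h1.exp
  have := h.div_const (Real.sqrt (2 * Real.pi))
  unfold stdNormalPDF
  exact this.congr_deriv (by ring)

theorem no_butterfly_spread_arbitrage (ω ω' ω'' : ℝ → ℝ)
    (hpos : ∀ κ, 0 < ω κ)
    (hderiv : ∀ κ, HasDerivAt ω (ω' κ) κ)
    (hderiv2 : ∀ κ, HasDerivAt ω' (ω'' κ) κ)
    (hvert : ∀ κ, 0 ≤ stdNormalCDF ((κ + ω κ ^ 2 / 2) / ω κ)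
      + stdNormalPDF ((κ + ω κ ^ 2 / 2) / ω κ) * ω' κ)
    (hbfly : ∀ κ, 0 ≤ (1 - (κ / ω κ) * ω' κ) ^ 2 - (1 / 4) * (ω κ * ω' κ) ^ 2 + ω κ * ω'' κ) :
    ConvexOn ℝ Set.univ
      (fun κ => Real.exp κ * stdNormalCDF ((κ + ω κ ^ 2 / 2) / ω κ)
        - stdNormalCDF ((κ - ω κ ^ 2 / 2) / ω κ)) := by
  set zp : ℝ → ℝ := fun κ => (κ + ω κ ^ 2 / 2) / ω κ with hzp_def
  set zm : ℝ → ℝ := fun κ => (κ - ω κ ^ 2 / 2) / ω κ with hzm_def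
  have hω : ∀ κ, ω κ ≠ 0 := fun κ => (hpos κ).ne'
  set A : ℝ → ℝ := fun κ =>
    ((1 + ω κ * ω' κ) * ω κ - (κ + ω κ ^ 2 / 2) * ω' κ) / ω κ ^ 2 with hA_def
  set B : ℝ → ℝ := fun κ =>
    ((1 - ω κ * ω' κ) * ω κ - (κ - ω κ ^ 2 / 2) * ω' κ) / ω κ ^ 2 with hB_def
  have hzp : ∀ κ, HasDerivAt zp (A κ) κ := by
    intro κ
    have hnum : HasDerivAt (fun κ => κ + ω κ ^ 2 / 2) (1 + ω κ * ω' κ) κ := by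
      have := (hasDerivAt_id κ).add (((hderiv κ).pow 2).div_const 2)
      exact this.congr_deriv (by ring)
    exact hnum.div (hderiv κ) (hω κ)
  have hzm : ∀ κ, HasDerivAt zm (B κ) κ := by
    intro κ
    have hnum : HasDerivAt (fun κ => κ - ω κ ^ 2 / 2) (1 - ω κ * ω' κ) κ := by
      have := (hasDerivAt_id κ).sub (((hderiv κ).pow 2).div_const 2)
      exact this.congr_deriv (by ring)
    exact hnum.div (hderiv κ) (hω κ)
  -- key identity
  have hkey : ∀ κ, stdNormalPDF (zm κ) = Real.exp κ * stdNormalPDF (zp κ) := by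
    intro κ
    unfold stdNormalPDF
    rw [mul_div_assoc', ← Real.exp_add]
    congr 1
    have h : zp κ ^ 2 - zm κ ^ 2 = 2 * κ := by
      simp only [hzp_def, hzm_def]
      field_simp [hω κ]
      ring
    rw [Real.exp_eq_exp]
    linarith [h]
  have hAB : ∀ κ, A κ - B κ = ω' κ := by
    intro κ
    simp only [hA_def, hB_def]
    field_simp [hω κ]
    ring
  set Q : ℝ → ℝ := fun κ =>
    Real.exp κ * (stdNormalCDF (zp κ) + stdNormalPDF (zp κ) * ω' κ) with hQ_def
  have hP : ∀ κ, HasDerivAt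
      (fun κ => Real.exp κ * stdNormalCDF ((κ + ω κ ^ 2 / 2) / ω κ)
        - stdNormalCDF ((κ - ω κ ^ 2 / 2) / ω κ)) (Q κ) κ := by
    intro κ
    have h1 : HasDerivAt (fun κ => stdNormalCDF (zp κ)) (stdNormalPDF (zp κ) * A κ) κ :=
      (cdf_hasDerivAt (zp κ)).comp κ (hzp κ)
    have h2 : HasDerivAt (fun κ => stdNormalCDF (zm κ)) (stdNormalPDF (zm κ) * B κ) κ :=
      (cdf_hasDerivAt (zm κ)).comp κ (hzm κ)
    have h3 := ((Real.hasDerivAt_exp κ).mul h1).sub h2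
    refine h3.congr_deriv (Eq.symm ?_)
    rw [hkey κ]
    simp only [hQ_def]
    linear_combination (-(Real.exp κ * stdNormalPDF (zp κ))) * hAB κ
  -- derivative of Q
  set g : ℝ → ℝ := fun κ => stdNormalCDF (zp κ) + stdNormalPDF (zp κ) * ω' κ with hg_def
  set R : ℝ → ℝ := fun κ =>
    Real.exp κ * g κ + Real.exp κ *
      (stdNormalPDF (zp κ) * A κ +
        ((-zp κ * stdNormalPDF (zp κ) * A κ) * ω' κ + stdNormalPDF (zp κ) * ω'' κ)) with hR_def
  have hQd : ∀ κ, HasDerivAt Q (R κ) κ := by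
    intro κ
    have h1 : HasDerivAt (fun κ => stdNormalCDF (zp κ)) (stdNormalPDF (zp κ) * A κ) κ :=
      (cdf_hasDerivAt (zp κ)).comp κ (hzp κ)
    have h2 : HasDerivAt (fun κ => stdNormalPDF (zp κ)) (-zp κ * stdNormalPDF (zp κ) * A κ) κ := by
      exact (pdf_hasDerivAt (zp κ)).comp κ (hzp κ)
    have hg : HasDerivAt g
        (stdNormalPDF (zp κ) * A κ +
          ((-zp κ * stdNormalPDF (zp κ) * A κ) * ω' κ + stdNormalPDF (zp κ) * ω'' κ)) κ :=
      h1.add (h2.mul (hderiv2 κ))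
    exact (Real.hasDerivAt_exp κ).mul hg
  have hRnn : ∀ κ, 0 ≤ R κ := by
    intro κ
    have hxi : A κ * (1 - zp κ * ω' κ) + ω'' κ =
        ((1 - (κ / ω κ) * ω' κ) ^ 2 - (1 / 4) * (ω κ * ω' κ) ^ 2 + ω κ * ω'' κ) / ω κ := by
      simp only [hA_def, hzp_def]
      field_simp [hω κ]
      ring
    have h1 : R κ = Real.exp κ * g κ +
        Real.exp κ * stdNormalPDF (zp κ) * (A κ * (1 - zp κ * ω' κ) + ω'' κ) := by
      simp only [hR_def]
      ring
    rw [h1, hxi]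
    have hg0 : 0 ≤ g κ := hvert κ
    have hφ := pdf_pos (zp κ)
    have he := Real.exp_pos κ
    have := hbfly κ
    have := hpos κ
    positivity
  have hPdiff : Differentiable ℝ _ := fun κ => (hP κ).differentiableAt
  apply Monotone.convexOn_univ_of_deriv hPdiff
  have hdq : deriv _ = Q := funext fun κ => (hP κ).deriv
  rw [hdq]
  exact monotone_of_deriv_nonneg (fun κ => (hQd κ).differentiableAt)
    (fun κ => by rw [(hQd κ).deriv]; exact hRnn κ)
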